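/- For all positive integers p_1,...,p_k, the star-critical Gallai-Ramsey number satisfies gr_k^*(K_3 : K_{p_1},...,K_{p_k}) = gr_k(K_3 : K_{p_1},...,K_{p_k}) - 1. Equivalently, if n = gr_k(K_3 : K_{p_1},...,K_{p_k}), then there exists a k-edge-coloring of K_n minus one edge containing no rainbow triangle and no monochromatic K_{p_i} in color i for any i. -/

import Mathlib

def RainbowTri {V : Type} {k : ℕ} (Adj : V → V → Prop) (c : V → V → Fin k) : Prop :=
  ∃ a b d : V, Adj a b ∧ Adj a d ∧ Adj b d ∧
    c a b ≠ c a d ∧ c a b ≠ c b d ∧ c a d ≠ c b d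

def MonoTri {V : Type} {k : ℕ} (Adj : V → V → Prop) (c : V → V → Fin k) : Prop :=
  ∃ a b d : V, a ≠ b ∧ a ≠ d ∧ b ≠ d ∧ Adj a b ∧ Adj a d ∧ Adj b d ∧
    c a b = c a d ∧ c a d = c b d

def MonoP4 {V : Type} {k : ℕ} (Adj : V → V → Prop) (c : V → V → Fin k) : Prop :=
  ∃ a b d e : V, a ≠ b ∧ a ≠ d ∧ a ≠ e ∧ b ≠ d ∧ b ≠ e ∧ d ≠ e ∧
    Adj a b ∧ Adj b d ∧ Adj d e ∧ c a b = c b d ∧ c b d = c d e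

def MonoC4 {V : Type} {k : ℕ} (Adj : V → V → Prop) (c : V → V → Fin k) : Prop :=
  ∃ a b d e : V, a ≠ b ∧ a ≠ d ∧ a ≠ e ∧ b ≠ d ∧ b ≠ e ∧ d ≠ e ∧
    Adj a b ∧ Adj b d ∧ Adj d e ∧ Adj e a ∧
    c a b = c b d ∧ c b d = c d e ∧ c d e = c e a

def MonoClique {V : Type} {k : ℕ} [DecidableEq V] (Adj : V → V → Prop)
    (c : V → V → Fin k) (p : ℕ) (i : Fin k) : Prop :=
  ∃ S : Finset V, S.card = p ∧ ∀ a ∈ S, ∀ b ∈ S, a ≠ b → Adj a b ∧ c a b = i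

def MonoStar {V : Type} {k : ℕ} [DecidableEq V] (Adj : V → V → Prop)
    (c : V → V → Fin k) (m : ℕ) (i : Fin k) : Prop :=
  ∃ v : V, ∃ S : Finset V, S.card = m ∧ v ∉ S ∧ ∀ u ∈ S, Adj v u ∧ c v u = i

def Full {V : Type} : V → V → Prop := fun a b => a ≠ b

def OAdj {m : ℕ} (A : Finset (Fin m)) : Option (Fin m) → Option (Fin m) → Prop
  | some i, some j => i ≠ j
  | some i, none   => i ∈ A
  | none,   some j => j ∈ A
  | none,   none   => False

def IsGallaiPartition {n k q : ℕ} (c : Fin n → Fin n → Fin k)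
    (P : Fin q → Finset (Fin n)) : Prop :=
  2 ≤ q ∧ (∀ i, (P i).Nonempty) ∧ (∀ i j, i ≠ j → Disjoint (P i) (P j)) ∧
  (∀ x : Fin n, ∃ i, x ∈ P i) ∧
  (∀ i j, i ≠ j → ∃ col : Fin k, ∀ a ∈ P i, ∀ b ∈ P j, c a b = col) ∧
  (∃ c1 c2 : Fin k, ∀ i j, i ≠ j → ∀ a ∈ P i, ∀ b ∈ P j, c a b = c1 ∨ c a b = c2)

def MonoCopy {W V : Type} {k : ℕ} (H : SimpleGraph W) (Adj : V → V → Prop)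
    (c : V → V → Fin k) (i : Fin k) : Prop :=
  ∃ φ : W → V, Function.Injective φ ∧
    ∀ a b, H.Adj a b → Adj (φ a) (φ b) ∧ c (φ a) (φ b) = i

def MonoMergeCopy {W V : Type} {k : ℕ} (H : SimpleGraph W)
    (c : V → V → Fin k) (i : Fin k) : Prop :=
  ∃ φ : W → V, ∀ a b, H.Adj a b → φ a ≠ φ b ∧ c (φ a) (φ b) = i


lemma oadj_ne {m : ℕ} {A : Finset (Fin m)} {w : Fin m} (hw : w ∉ A)
    {x y : Option (Fin m)} (h : OAdj A x y) : x.getD w ≠ y.getD w := by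
  cases x <;> cases y <;> simp [OAdj] at h ⊢
  · rintro rfl; exact hw h
  · rintro rfl; exact hw h
  · exact h

lemma oadj_univ {m : ℕ} {x y : Option (Fin m)} (h : x ≠ y) :
    OAdj (Finset.univ : Finset (Fin m)) x y := by
  cases x <;> cases y <;> simp_all [OAdj]

theorem stmt4 (k : ℕ) (hk : 1 ≤ k) (p : Fin k → ℕ) (hp : ∀ i, 0 < p i) (n : ℕ)
    (hn : IsLeast {n' | ∀ c : Fin n' → Fin n' → Fin k, (∀ a b, c a b = c b a) →
        RainbowTri Full c ∨ ∃ i, MonoClique Full c (p i) i} n) :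
    IsLeast {s | ∀ A : Finset (Fin (n - 1)), A.card = s →
      ∀ c : Option (Fin (n - 1)) → Option (Fin (n - 1)) → Fin k,
        (∀ a b, c a b = c b a) →
        RainbowTri (OAdj A) c ∨ ∃ i, MonoClique (OAdj A) c (p i) i} (n - 1) := by
  have hn1 : 1 ≤ n := by
    by_contra h
    push_neg at h
    interval_cases n
    rcases hn.1 (fun a _ => (a : Fin 0).elim0) (fun a _ => a.elim0) with
      ⟨a, _⟩ | ⟨i, S, hS, _⟩
    · exact a.elim0
    · have : 0 < S.card := hS ▸ hp i
      obtain ⟨x, _⟩ := Finset.card_pos.1 this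
      exact x.elim0
  constructor
  · -- membership: s = n - 1 works
    intro A hA c hsym
    have hAu : A = Finset.univ := Finset.eq_univ_of_card A (by simpa using hA)
    subst hAu
    have hm : n - 1 + 1 = n := Nat.succ_pred_eq_of_pos hn1
    set g : Fin n → Option (Fin (n - 1)) :=
      fun a => finSuccEquiv (n - 1) (Fin.cast hm.symm a) with hg
    have hginj : Function.Injective g := by
      intro a b hab
      have := (finSuccEquiv (n - 1)).injective hab
      exact Fin.cast_injective _ this
    rcases hn.1 (fun a b => c (g a) (g b)) (fun a b => hsym _ _) with
      ⟨a, b, d, hab, had, hbd, h1, h2, h3⟩ | ⟨i, S, hS, hSc⟩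
    · exact Or.inl ⟨g a, g b, g d, oadj_univ (hginj.ne hab), oadj_univ (hginj.ne had),
        oadj_univ (hginj.ne hbd), h1, h2, h3⟩
    · refine Or.inr ⟨i, S.image g, by rw [Finset.card_image_of_injective _ hginj, hS], ?_⟩
      intro a' ha' b' hb' hne
      obtain ⟨a, ha, rfl⟩ := Finset.mem_image.1 ha'
      obtain ⟨b, hb, rfl⟩ := Finset.mem_image.1 hb'
      have hne' : a ≠ b := fun h => hne (by rw [h])
      obtain ⟨_, hc⟩ := hSc a ha b hb hne'
      exact ⟨oadj_univ hne, hc⟩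
  · -- lower bound
    intro s hs
    by_contra hlt
    push_neg at hlt
    have hnot : ¬ (∀ c : Fin (n - 1) → Fin (n - 1) → Fin k, (∀ a b, c a b = c b a) →
        RainbowTri Full c ∨ ∃ i, MonoClique Full c (p i) i) := by
      intro h
      have := hn.2 h
      omega
    push_neg at hnot
    obtain ⟨c₀, hsym, hnr, hnm⟩ := hnot
    obtain ⟨A, -, hAcard⟩ :=
      Finset.exists_subset_card_eq (s := (Finset.univ : Finset (Fin (n - 1)))) (n := s) (by simp; omega)
    have hwex : ∃ w : Fin (n - 1), w ∉ A := by
      by_contra h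
      push_neg at h
      have : A = Finset.univ := Finset.eq_univ_iff_forall.2 h
      rw [this] at hAcard
      simp at hAcard
      omega
    obtain ⟨w, hw⟩ := hwex
    rcases hs A hAcard (fun x y => c₀ (x.getD w) (y.getD w)) (fun a b => hsym _ _) with
      ⟨a, b, d, hab, had, hbd, h1, h2, h3⟩ | ⟨i, S, hS, hSc⟩
    · exact hnr ⟨a.getD w, b.getD w, d.getD w, oadj_ne hw hab, oadj_ne hw had,
        oadj_ne hw hbd, h1, h2, h3⟩
    · apply hnm i
      have hinj : Set.InjOn (fun x : Option (Fin (n - 1)) => x.getD w) S := by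
        intro x hx y hy hxy
        by_contra hne
        exact oadj_ne hw (hSc x hx y hy hne).1 hxy
      refine ⟨S.image (fun x => x.getD w), by rw [Finset.card_image_of_injOn hinj, hS], ?_⟩
      intro a' ha' b' hb' hne
      obtain ⟨a, ha, rfl⟩ := Finset.mem_image.1 ha'
      obtain ⟨b, hb, rfl⟩ := Finset.mem_image.1 hb'
      have hne' : a ≠ b := fun h => hne (by rw [h])
      obtain ⟨_, hc⟩ := hSc a ha b hb hne'
      exact ⟨hne, hc⟩
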